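/- Let U₀, V₀ ∈ ℝ^{n×r} have orthonormal columns, let S₀ ∈ ℝ^{r×r}, W₀ := U₀S₀V₀ᵀ, let f ∈ ℝ^{n×n} and λ ∈ ℝ, and define the updates K := U₀S₀ + λ f V₀, L := V₀S₀ᵀ + λ fᵀ U₀, and S_new := S₀ + λ U₀ᵀ f V₀. Let Ũ, Ṽ ∈ ℝ^{n×r'} satisfy Ũᵀ Ũ = I, Ṽᵀ Ṽ = I, Ũᵀ U₀ = 0, Ṽᵀ V₀ = 0, together with the augmentation conditions (I − U₀U₀ᵀ − ŨŨᵀ) f V₀ = 0 and (I − V₀V₀ᵀ − ṼṼᵀ) fᵀ U₀ = 0 (i.e. the augmented bases capture the ranges of K and L). Then the augmented low-rank iterate satisfies U₀ S_new V₀ᵀ + Ũ Ũᵀ K V₀ᵀ + U₀ Lᵀ Ṽ Ṽᵀ = W₀ + λ (U₀U₀ᵀ f + f V₀V₀ᵀ − U₀U₀ᵀ f V₀V₀ᵀ) = W₀ + λ P(U₀,V₀) f; that is, one GeoLoRA basis-augmentation and coefficient-assembly step equals an explicit projected-gradient step. -/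
import Mathlib


open Matrix

attribute [local instance] Matrix.frobeniusNormedAddCommGroup Matrix.frobeniusNormedSpace

/-- The Frobenius inner product `⟨A,B⟩ = trace (Aᵀ * B)`. -/
noncomputable def frobInner {m k : Type*} [Fintype m] [Fintype k]
    (A B : Matrix m k ℝ) : ℝ := (Aᵀ * B).trace

/-- The continuous linear map `H ↦ ⟨G, H⟩` (Frobenius inner product against `G`),
used to express that `G` is the gradient of a function at a point. -/
noncomputable def frobCLM {m k : Type*} [Fintype m] [Fintype k] (G : Matrix m k ℝ) :
    Matrix m k ℝ →L[ℝ] ℝ :=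
  LinearMap.toContinuousLinearMap
    { toFun := fun H => (Gᵀ * H).trace
      map_add' := fun A B => by simp [Matrix.mul_add]
      map_smul' := fun c A => by simp [Matrix.mul_smul] }

/-- The tangent-space projection `P(U,V)Z = UUᵀZ + ZVVᵀ − UUᵀZVVᵀ`. -/
noncomputable def tanProj {n r : ℕ} (U V : Matrix (Fin n) (Fin r) ℝ)
    (Z : Matrix (Fin n) (Fin n) ℝ) : Matrix (Fin n) (Fin n) ℝ :=
  U * Uᵀ * Z + Z * (V * Vᵀ) - U * Uᵀ * Z * (V * Vᵀ)

/-- One GeoLoRA basis-augmentation and coefficient-assembly step equals an explicit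
projected-gradient step: with `K = U₀S₀ + λ f V₀`, `L = V₀S₀ᵀ + λ fᵀ U₀`,
`S_new = S₀ + λ U₀ᵀ f V₀`, and augmentations `Ũ, Ṽ` orthonormal, orthogonal to `U₀, V₀`, and
capturing the ranges of `K` and `L`, one has
`U₀ S_new V₀ᵀ + Ũ Ũᵀ K V₀ᵀ + U₀ Lᵀ Ṽ Ṽᵀ = W₀ + λ (U₀U₀ᵀ f + f V₀V₀ᵀ − U₀U₀ᵀ f V₀V₀ᵀ)
 = W₀ + λ P(U₀,V₀) f`. -/
theorem geolora_step_is_projected_gradient_step (n r r' : ℕ)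
    (U₀ V₀ : Matrix (Fin n) (Fin r) ℝ) (S₀ : Matrix (Fin r) (Fin r) ℝ)
    (hU₀ : U₀ᵀ * U₀ = 1) (hV₀ : V₀ᵀ * V₀ = 1)
    (f : Matrix (Fin n) (Fin n) ℝ) (lam : ℝ)
    (Ua Va : Matrix (Fin n) (Fin r') ℝ)
    (hUa : Uaᵀ * Ua = 1) (hVa : Vaᵀ * Va = 1)
    (hUaU₀ : Uaᵀ * U₀ = 0) (hVaV₀ : Vaᵀ * V₀ = 0)
    (haugU : (1 - U₀ * U₀ᵀ - Ua * Uaᵀ) * (f * V₀) = 0)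
    (haugV : (1 - V₀ * V₀ᵀ - Va * Vaᵀ) * (fᵀ * U₀) = 0) :
    U₀ * (S₀ + lam • (U₀ᵀ * f * V₀)) * V₀ᵀ
        + Ua * Uaᵀ * (U₀ * S₀ + lam • (f * V₀)) * V₀ᵀ
        + U₀ * (V₀ * S₀ᵀ + lam • (fᵀ * U₀))ᵀ * (Va * Vaᵀ)
      = U₀ * S₀ * V₀ᵀ
        + lam • (U₀ * U₀ᵀ * f + f * (V₀ * V₀ᵀ) - U₀ * U₀ᵀ * f * (V₀ * V₀ᵀ)) ∧
    U₀ * S₀ * V₀ᵀ + lam • (U₀ * U₀ᵀ * f + f * (V₀ * V₀ᵀ) - U₀ * U₀ᵀ * f * (V₀ * V₀ᵀ))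
      = U₀ * S₀ * V₀ᵀ + lam • tanProj U₀ V₀ f := by
  have hA : Ua * Uaᵀ * (f * V₀) = f * V₀ - U₀ * U₀ᵀ * (f * V₀) := by
    have h : (f * V₀ - U₀ * U₀ᵀ * (f * V₀)) - Ua * Uaᵀ * (f * V₀) = 0 := by
      rw [← haugU, Matrix.sub_mul, Matrix.sub_mul, Matrix.one_mul]
    have := sub_eq_zero.mp h
    exact this.symm
  have hB : Va * Vaᵀ * (fᵀ * U₀) = fᵀ * U₀ - V₀ * V₀ᵀ * (fᵀ * U₀) := by
    have h : (fᵀ * U₀ - V₀ * V₀ᵀ * (fᵀ * U₀)) - Va * Vaᵀ * (fᵀ * U₀) = 0 := by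
      rw [← haugV, Matrix.sub_mul, Matrix.sub_mul, Matrix.one_mul]
    have := sub_eq_zero.mp h
    exact this.symm
  have hBt : U₀ᵀ * f * (Va * Vaᵀ) = U₀ᵀ * f - U₀ᵀ * f * (V₀ * V₀ᵀ) := by
    have := congrArg Matrix.transpose hB
    simpa [Matrix.transpose_mul, Matrix.transpose_sub, Matrix.mul_assoc] using this
  constructor
  · have h1 : Ua * Uaᵀ * (U₀ * S₀ + lam • (f * V₀)) * V₀ᵀ
        = lam • ((f * V₀ - U₀ * U₀ᵀ * (f * V₀)) * V₀ᵀ) := by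
      rw [Matrix.mul_add, Matrix.add_mul]
      have h0 : Ua * Uaᵀ * (U₀ * S₀) = 0 := by
        calc Ua * Uaᵀ * (U₀ * S₀) = Ua * (Uaᵀ * U₀) * S₀ := by
              simp [Matrix.mul_assoc]
          _ = 0 := by rw [hUaU₀]; simp
      rw [h0, Matrix.mul_smul, Matrix.smul_mul, hA]
      simp
    have h2 : U₀ * (V₀ * S₀ᵀ + lam • (fᵀ * U₀))ᵀ * (Va * Vaᵀ)
        = lam • (U₀ * (U₀ᵀ * f - U₀ᵀ * f * (V₀ * V₀ᵀ))) := by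
      rw [Matrix.transpose_add, Matrix.transpose_smul, Matrix.transpose_mul,
        Matrix.transpose_mul, Matrix.transpose_transpose, Matrix.transpose_transpose]
      rw [Matrix.mul_add, Matrix.add_mul]
      have h0 : U₀ * (S₀ * V₀ᵀ) * (Va * Vaᵀ) = 0 := by
        have hv : V₀ᵀ * Va = 0 := by
          have := congrArg Matrix.transpose hVaV₀
          simpa using this
        calc U₀ * (S₀ * V₀ᵀ) * (Va * Vaᵀ) = U₀ * S₀ * (V₀ᵀ * Va) * Vaᵀ := by
              simp [Matrix.mul_assoc]
          _ = 0 := by rw [hv]; simp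
      rw [h0, Matrix.mul_smul, Matrix.smul_mul]
      have he : U₀ * (U₀ᵀ * f) * (Va * Vaᵀ) = U₀ * (U₀ᵀ * f - U₀ᵀ * f * (V₀ * V₀ᵀ)) := by
        calc U₀ * (U₀ᵀ * f) * (Va * Vaᵀ) = U₀ * (U₀ᵀ * f * (Va * Vaᵀ)) := by
              rw [Matrix.mul_assoc]
          _ = U₀ * (U₀ᵀ * f - U₀ᵀ * f * (V₀ * V₀ᵀ)) := by rw [hBt]
      rw [he]
      simp
    rw [h1, h2]
    rw [Matrix.mul_add, Matrix.add_mul, Matrix.mul_smul, Matrix.smul_mul]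
    have key : U₀ * (U₀ᵀ * f * V₀) * V₀ᵀ
        + ((f * V₀ - U₀ * U₀ᵀ * (f * V₀)) * V₀ᵀ
          + U₀ * (U₀ᵀ * f - U₀ᵀ * f * (V₀ * V₀ᵀ)))
        = U₀ * U₀ᵀ * f + f * (V₀ * V₀ᵀ) - U₀ * U₀ᵀ * f * (V₀ * V₀ᵀ) := by
      have hUU : U₀ * (U₀ᵀ * f - U₀ᵀ * f * (V₀ * V₀ᵀ))
          = U₀ * U₀ᵀ * f - U₀ * U₀ᵀ * f * (V₀ * V₀ᵀ) := by
        rw [Matrix.mul_sub]; simp [Matrix.mul_assoc]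
      rw [hUU]
      simp only [Matrix.sub_mul, Matrix.mul_assoc]
      abel
    rw [add_assoc, add_assoc, ← smul_add, ← smul_add, key]
  · rfl
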